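/- arXiv:2510.17167 — 6 statements merged into one kernel-verified Lean document; each statement's English description precedes it below -/
import Mathlib

section
/- Suppose W|X=x ~ N(β₀ + β₁x, σ₂²) and Y|X=x ~ N(γ₀ + γ₁x, σ₃²) with β₁ ≠ 0 and σ₃² - γ₁²σ₂²/β₁² > 0. Define h(w,y) = (1/σ_wx) φ((y - γ_wx - (γ₁/β₁)w)/σ_wx) where φ is the standard normal density, γ_wx = γ₀ - γ₁β₀/β₁ and σ_wx² = σ₃² - γ₁²σ₂²/β₁². Then for all x and y, the density of Y given X=x equals ∫ h(w,y) p(w|x) dw. -/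
open MeasureTheory

/-- The standard normal probability density function. -/
noncomputable def stdNormalPDF (z : ℝ) : ℝ :=
  (Real.sqrt (2 * Real.pi))⁻¹ * Real.exp (-z ^ 2 / 2)

/-- Gaussian convolution identity: if `W|X=x ~ N(β₀+β₁x, σ₂²)` and
`Y|X=x ~ N(γ₀+γ₁x, σ₃²)` with `β₁ ≠ 0` and `σ₃² - γ₁²σ₂²/β₁² > 0`, then with
`γ_wx = γ₀ - γ₁β₀/β₁`, `σ_wx = √(σ₃² - γ₁²σ₂²/β₁²)` and
`h(w,y) = (1/σ_wx) φ((y - γ_wx - (γ₁/β₁)w)/σ_wx)`, the density of `Y` given `X = x`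
equals `∫ h(w,y) p(w|x) dw` for all `x, y`. -/
theorem stmt6 (β₀ β₁ γ₀ γ₁ σ₂ σ₃ : ℝ) (hβ₁ : β₁ ≠ 0) (hσ₂ : 0 < σ₂) (hσ₃ : 0 < σ₃)
    (hpos : 0 < σ₃ ^ 2 - γ₁ ^ 2 * σ₂ ^ 2 / β₁ ^ 2) :
    ∀ x y : ℝ,
      (1 / σ₃) * stdNormalPDF ((y - (γ₀ + γ₁ * x)) / σ₃)
        = ∫ w : ℝ,
            ((1 / Real.sqrt (σ₃ ^ 2 - γ₁ ^ 2 * σ₂ ^ 2 / β₁ ^ 2)) *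
              stdNormalPDF ((y - (γ₀ - γ₁ * β₀ / β₁) - (γ₁ / β₁) * w) /
                Real.sqrt (σ₃ ^ 2 - γ₁ ^ 2 * σ₂ ^ 2 / β₁ ^ 2)))
            * ((1 / σ₂) * stdNormalPDF ((w - (β₀ + β₁ * x)) / σ₂)) := by
  intro x y
  set s : ℝ := Real.sqrt (σ₃ ^ 2 - γ₁ ^ 2 * σ₂ ^ 2 / β₁ ^ 2) with hs_def
  have hs : 0 < s := Real.sqrt_pos.mpr hpos
  have hs2 : s ^ 2 = σ₃ ^ 2 - γ₁ ^ 2 * σ₂ ^ 2 / β₁ ^ 2 := Real.sq_sqrt hpos.le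
  set a : ℝ := γ₁ / β₁ with ha_def
  set m : ℝ := β₀ + β₁ * x with hm_def
  set u : ℝ := y - (γ₀ - γ₁ * β₀ / β₁) with hu_def
  have ht2 : σ₃ ^ 2 = s ^ 2 + a ^ 2 * σ₂ ^ 2 := by
    rw [hs2, ha_def]; field_simp; ring
  set k : ℝ := σ₃ ^ 2 / (2 * s ^ 2 * σ₂ ^ 2) with hk_def
  have hk : 0 < k := by positivity
  set B : ℝ := (σ₂ ^ 2 * a * u + s ^ 2 * m) / σ₃ ^ 2 with hB_def
  set C : ℝ := (1 / (2 * Real.pi * s * σ₂)) * Real.exp (-(u - a * m) ^ 2 / (2 * σ₃ ^ 2))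
    with hC_def
  have hπ : (0:ℝ) < 2 * Real.pi := by positivity
  have h2π : Real.sqrt (2 * Real.pi) * Real.sqrt (2 * Real.pi) = 2 * Real.pi :=
    Real.mul_self_sqrt hπ.le
  have hsπ : Real.sqrt (2 * Real.pi) ≠ 0 := by positivity
  have hmul : Real.sqrt 2 * Real.sqrt Real.pi = Real.sqrt (2 * Real.pi) :=
    (Real.sqrt_mul (by norm_num) _).symm
  have huam : y - (γ₀ + γ₁ * x) = u - a * m := by
    rw [hu_def, ha_def, hm_def]; field_simp <;> ring
  have key : ∀ w : ℝ,
      ((1 / s) * stdNormalPDF ((y - (γ₀ - γ₁ * β₀ / β₁) - (γ₁ / β₁) * w) / s))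
        * ((1 / σ₂) * stdNormalPDF ((w - m) / σ₂))
      = C * Real.exp (-k * (w - B) ^ 2) := by
    intro w
    have h1 : y - (γ₀ - γ₁ * β₀ / β₁) - (γ₁ / β₁) * w = u - a * w := by
      rw [hu_def, ha_def]; try ring
    have hE : -((u - a * w) / s) ^ 2 / 2 + -((w - m) / σ₂) ^ 2 / 2
        = -(u - a * m) ^ 2 / (2 * σ₃ ^ 2) + -k * (w - B) ^ 2 := by
      have hσ₃2 : (s ^ 2 + a ^ 2 * σ₂ ^ 2) ≠ 0 := by positivity
      rw [hk_def, hB_def, ht2]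
      field_simp
      ring
    calc ((1 / s) * stdNormalPDF ((y - (γ₀ - γ₁ * β₀ / β₁) - (γ₁ / β₁) * w) / s))
          * ((1 / σ₂) * stdNormalPDF ((w - m) / σ₂))
        = (1 / (2 * Real.pi * s * σ₂)) *
            Real.exp (-((u - a * w) / s) ^ 2 / 2 + -((w - m) / σ₂) ^ 2 / 2) := by
          rw [h1]
          simp only [stdNormalPDF]
          rw [Real.exp_add]
          field_simp
          rw [Real.sq_sqrt hπ.le]
      _ = C * Real.exp (-k * (w - B) ^ 2) := by
          rw [hE, Real.exp_add, hC_def]; ring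
  rw [show (∫ w : ℝ,
        ((1 / s) * stdNormalPDF ((y - (γ₀ - γ₁ * β₀ / β₁) - (γ₁ / β₁) * w) / s))
        * ((1 / σ₂) * stdNormalPDF ((w - m) / σ₂)))
      = ∫ w : ℝ, C * Real.exp (-k * (w - B) ^ 2) from by
    congr 1; funext w; exact key w]
  rw [MeasureTheory.integral_const_mul]
  rw [show (∫ w : ℝ, Real.exp (-k * (w - B) ^ 2))
      = ∫ w : ℝ, Real.exp (-k * w ^ 2) from
    integral_sub_right_eq_self (μ := volume) (fun w => Real.exp (-k * w ^ 2)) B]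
  rw [integral_gaussian]
  have hsqrt : Real.sqrt (Real.pi / k) = Real.sqrt (2 * Real.pi) * s * σ₂ / σ₃ := by
    rw [show Real.pi / k = (Real.sqrt (2 * Real.pi) * s * σ₂ / σ₃) ^ 2 from by
      have h : (Real.sqrt (2 * Real.pi) * s * σ₂ / σ₃) ^ 2
          = (2 * Real.pi) * s ^ 2 * σ₂ ^ 2 / σ₃ ^ 2 := by
        rw [div_pow, mul_pow, mul_pow, sq, h2π]
      rw [h, hk_def]
      field_simp]
    exact Real.sqrt_sq (by positivity)
  rw [hsqrt, hC_def, huam, stdNormalPDF]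
  have hexp : -((u - a * m) / σ₃) ^ 2 / 2 = -(u - a * m) ^ 2 / (2 * σ₃ ^ 2) := by
    rw [div_pow]; ring
  rw [hexp]
  field_simp
  rw [Real.sq_sqrt hπ.le]
end

section
/- Let X, U, W, Y be discrete random variables with finite supports, strictly positive probability mass functions, and suppose the completeness condition holds: E[g(U)|W] = 0 a.s. implies g(U) = 0 a.s. Then under conditional independence X ⊥ Y | U and X ⊥ W | U, the matrix P(W|U) has full column rank, and P(y|X) = h(W,y)ᵀ P(W|X) where h(W,y) = (P(W|U)⁺ P(y|U))ᵀ and P(W|U)⁺ is a left inverse of P(W|U). Moreover if P(W|U) is square it is invertible and the solution is unique. -/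
open Matrix BigOperators

/-- Discrete bridge-function identification (Corollary on discrete variables).
`X, U, W, Y` are discrete with finite supports, all probabilities strictly positive.
Completeness of `P(U|W)` (encoded as: `∑_u g(u) P(u|w) = 0` for all `w` implies `g ≡ 0`),
Bayes' rule relating `P(W|U)` to `P(U|W)`, and the conditional-independence
factorizations `P(Y|X) = P(Y|U) P(U|X)` (from `X ⊥ Y | U`) and
`P(W|X) = P(W|U) P(U|X)` (from `X ⊥ W | U`) imply:
`P(W|U)` has full column rank, i.e. it has a left inverse `P⁺`, and
`P(y|X) = h(W,y)ᵀ P(W|X)` with `h(W,y) = (P(W|U)⁺ P(y|U))ᵀ`, i.e.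
`P(Y|X) = P(Y|U) P⁺ P(W|X)`.  Moreover, if `P(W|U)` is square
(`|W| = |U|`) the left inverse (hence the solution) is unique. -/
theorem stmt8 {𝒳 𝒰 𝒲 𝒴 : Type*} [Fintype 𝒳] [Fintype 𝒰] [Fintype 𝒲] [Fintype 𝒴]
    [DecidableEq 𝒰] [DecidableEq 𝒲]
    (pu : 𝒰 → ℝ) (pw : 𝒲 → ℝ)
    (PUW : Matrix 𝒰 𝒲 ℝ) (PWU : Matrix 𝒲 𝒰 ℝ)
    (PUX : Matrix 𝒰 𝒳 ℝ) (PWX : Matrix 𝒲 𝒳 ℝ)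
    (PYU : Matrix 𝒴 𝒰 ℝ) (PYX : Matrix 𝒴 𝒳 ℝ)
    (hpu : ∀ u, 0 < pu u) (hpw : ∀ w, 0 < pw w)
    (hPUWpos : ∀ u w, 0 < PUW u w)
    (hBayes : ∀ w u, PWU w u = pw w * PUW u w / pu u)
    (hcomplete : ∀ g : 𝒰 → ℝ, (∀ w, ∑ u, g u * PUW u w = 0) → g = 0)
    (hYfact : PYX = PYU * PUX)
    (hWfact : PWX = PWU * PUX) :
    (∃ Pplus : Matrix 𝒰 𝒲 ℝ, Pplus * PWU = 1 ∧ PYX = PYU * Pplus * PWX) ∧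
      (Fintype.card 𝒲 = Fintype.card 𝒰 →
        ∀ P1 P2 : Matrix 𝒰 𝒲 ℝ, P1 * PWU = 1 → P2 * PWU = 1 → P1 = P2) := by
  -- injectivity of mulVec of PWU
  have hinj : Function.Injective PWU.mulVecLin := by
    rw [← LinearMap.ker_eq_bot]
    rw [LinearMap.ker_eq_bot']
    intro x hx
    have hg : (fun u => x u / pu u) = 0 := by
      apply hcomplete
      intro w
      have hxw : PWU.mulVec x w = 0 := by
        rw [show PWU.mulVec x = 0 from hx]; rfl
      have : ∑ u, PWU w u * x u = 0 := by
        simpa [Matrix.mulVec, dotProduct] using hxw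
      have h2 : pw w * ∑ u, (x u / pu u) * PUW u w = 0 := by
        rw [Finset.mul_sum]
        rw [← this]
        apply Finset.sum_congr rfl
        intro u _
        rw [hBayes w u]
        field_simp
      have := mul_eq_zero.mp h2
      rcases this with h | h
      · exact absurd h (ne_of_gt (hpw w))
      · exact h
    funext u
    have := congrFun hg u
    simp only [Pi.zero_apply] at this
    have := div_eq_zero_iff.mp this
    rcases this with h | h
    · exact h
    · exact absurd h (ne_of_gt (hpu u))
  obtain ⟨g, hg⟩ := (PWU.mulVecLin).exists_leftInverse_of_injective
    (LinearMap.ker_eq_bot.mpr hinj)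
  refine ⟨⟨LinearMap.toMatrix' g, ?_, ?_⟩, ?_⟩
  case _ =>
    have : LinearMap.toMatrix' g * LinearMap.toMatrix' PWU.mulVecLin = 1 := by
      rw [← LinearMap.toMatrix'_comp, hg, LinearMap.toMatrix'_id]
    rwa [show LinearMap.toMatrix' PWU.mulVecLin = PWU from LinearMap.toMatrix'_toLin' PWU] at this
  case _ =>
    have h1 : LinearMap.toMatrix' g * PWU = 1 := by
      have : LinearMap.toMatrix' g * LinearMap.toMatrix' PWU.mulVecLin = 1 := by
        rw [← LinearMap.toMatrix'_comp, hg, LinearMap.toMatrix'_id]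
      rwa [show LinearMap.toMatrix' PWU.mulVecLin = PWU from LinearMap.toMatrix'_toLin' PWU] at this
    rw [hYfact, hWfact, Matrix.mul_assoc, ← Matrix.mul_assoc (LinearMap.toMatrix' g),
      h1, Matrix.one_mul]
  case _ =>
    intro hcard P1 P2 h1 h2
    have e : 𝒲 ≃ 𝒰 := Fintype.equivOfCardEq hcard
    set M : Matrix 𝒰 𝒰 ℝ := PWU.submatrix e.symm id with hM
    have key : ∀ P : Matrix 𝒰 𝒲 ℝ, P * PWU = 1 → P.submatrix id e.symm * M = 1 := by
      intro P hP
      rw [hM, Matrix.submatrix_mul_equiv, hP, Matrix.submatrix_id_id]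
    have k1 := key P1 h1
    have k2 := key P2 h2
    have hMinv : M * P2.submatrix id e.symm = 1 := mul_eq_one_comm.mp k2
    have : P1.submatrix id e.symm = P2.submatrix id e.symm := by
      calc P1.submatrix id e.symm = P1.submatrix id e.symm * (M * P2.submatrix id e.symm) := by
            rw [hMinv, Matrix.mul_one]
        _ = (P1.submatrix id e.symm * M) * P2.submatrix id e.symm := by rw [Matrix.mul_assoc]
        _ = P2.submatrix id e.symm := by rw [k1, Matrix.one_mul]
    have := congrArg (fun A : Matrix 𝒰 𝒰 ℝ => A.submatrix id e) this
    simpa [Matrix.submatrix_submatrix] using this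
end

section
/- Let U, X, Y, W satisfy the linear Gaussian model U = ε_U, X = α_U U + α₀ + ε_X, W = β_U U + β₀ + ε_W, Y = γ_U U + γ_X X + γ₀ + ε_Y, with independent standard normal noises and α_U β_U ≠ 0. Then with b_w = ((α_U²+1)γ_X + γ_U α_U)/(β_U α_U) and b₀ = γ₀ + γ_X α₀ − b_w β₀, the identity E[Y|X] = E[b_w W + b₀ | X] holds. -/
open MeasureTheory ProbabilityTheory


open MeasureTheory ProbabilityTheory Real
open scoped ENNReal NNReal

namespace Stmt13Aux

noncomputable def stdGauss2 : Measure (ℝ × ℝ) :=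
  (gaussianReal 0 1).prod (gaussianReal 0 1)

lemma gauss_eq_withDensity :
    gaussianReal 0 1 = (volume : Measure ℝ).withDensity (gaussianPDF 0 1) :=
  gaussianReal_of_var_ne_zero 0 one_ne_zero

instance : IsProbabilityMeasure stdGauss2 := by
  unfold stdGauss2; infer_instance

lemma stdGauss2_eq :
    stdGauss2 = (volume : Measure (ℝ × ℝ)).withDensity
      (fun p => gaussianPDF 0 1 p.1 * gaussianPDF 0 1 p.2) := by
  rw [stdGauss2]
  refine Measure.prod_eq fun s t hs ht => ?_
  rw [withDensity_apply _ (hs.prod ht), Measure.volume_eq_prod,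
    ← Measure.prod_restrict s t,
    lintegral_prod_mul ((measurable_gaussianPDF 0 1).aemeasurable)
      ((measurable_gaussianPDF 0 1).aemeasurable),
    gaussianReal_apply 0 one_ne_zero s, gaussianReal_apply 0 one_ne_zero t]

lemma refl_volume_preserving (a b : ℝ) (hab : a ^ 2 + b ^ 2 = 1) :
    MeasurePreserving (fun p : ℝ × ℝ => (a * p.1 + b * p.2, b * p.1 - a * p.2))
      volume volume := by
  have hdet : LinearMap.det (Matrix.toLin' !![a, b; b, -a]) = -1 := by
    rw [LinearMap.det_toLin', Matrix.det_fin_two_of]; nlinarith [hab]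
  have hmap : Measure.map (Matrix.toLin' !![a, b; b, -a]) volume = volume := by
    rw [Real.map_linearMap_volume_pi_eq_smul_volume_pi (by rw [hdet]; norm_num), hdet]
    norm_num
  have hmeas : Measurable (Matrix.toLin' !![a, b; b, -a]) :=
    (LinearMap.continuous_on_pi _).measurable
  have mp1 : MeasurePreserving (Matrix.toLin' !![a, b; b, -a])
      (volume : Measure (Fin 2 → ℝ)) volume := ⟨hmeas, hmap⟩
  have h2 : (fun p : ℝ × ℝ => (a * p.1 + b * p.2, b * p.1 - a * p.2)) =
      (MeasurableEquiv.finTwoArrow : (Fin 2 → ℝ) ≃ᵐ ℝ × ℝ) ∘ (Matrix.toLin' !![a, b; b, -a]) ∘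
        (MeasurableEquiv.finTwoArrow : (Fin 2 → ℝ) ≃ᵐ ℝ × ℝ).symm := by
    funext p
    simp [MeasurableEquiv.finTwoArrow, Matrix.toLin'_apply, Matrix.mulVec,
      dotProduct, Fin.sum_univ_two]
    ring
  rw [h2]
  exact (volume_preserving_finTwoArrow ℝ).comp
    (mp1.comp ((volume_preserving_finTwoArrow ℝ).symm _))

lemma pdfReal_eq (y : ℝ) :
    gaussianPDFReal 0 1 y = (Real.sqrt (2 * π))⁻¹ * Real.exp (-(y ^ 2) / 2) := by
  rw [gaussianPDFReal]; norm_num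

lemma pdf_mul_refl (a b : ℝ) (hab : a ^ 2 + b ^ 2 = 1) (u x : ℝ) :
    gaussianPDF 0 1 (a * u + b * x) * gaussianPDF 0 1 (b * u - a * x)
      = gaussianPDF 0 1 u * gaussianPDF 0 1 x := by
  simp only [gaussianPDF, ← ENNReal.ofReal_mul (gaussianPDFReal_nonneg _ _ _)]
  congr 1
  rw [pdfReal_eq, pdfReal_eq, pdfReal_eq, pdfReal_eq, mul_mul_mul_comm, ← Real.exp_add,
    mul_mul_mul_comm, ← Real.exp_add]
  congr 2
  linear_combination (-(u ^ 2 + x ^ 2) / 2) * hab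

lemma refl_gauss2_preserving (a b : ℝ) (hab : a ^ 2 + b ^ 2 = 1) :
    MeasurePreserving (fun p : ℝ × ℝ => (a * p.1 + b * p.2, b * p.1 - a * p.2))
      stdGauss2 stdGauss2 := by
  have hvol := refl_volume_preserving a b hab
  set R := fun p : ℝ × ℝ => (a * p.1 + b * p.2, b * p.1 - a * p.2) with hRdef
  have hRm : Measurable R := by fun_prop
  refine ⟨hRm, ?_⟩
  rw [stdGauss2_eq]
  ext s hs
  set ρ : ℝ × ℝ → ℝ≥0∞ := fun p => gaussianPDF 0 1 p.1 * gaussianPDF 0 1 p.2 with hρ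
  have hρm : Measurable ρ :=
    ((measurable_gaussianPDF 0 1).comp measurable_fst).mul
      ((measurable_gaussianPDF 0 1).comp measurable_snd)
  rw [Measure.map_apply hRm hs, withDensity_apply _ (hRm hs), withDensity_apply _ hs]
  calc ∫⁻ p in R ⁻¹' s, ρ p ∂volume
      = ∫⁻ p in R ⁻¹' s, ρ (R p) ∂volume := by
        refine lintegral_congr fun p => ?_
        exact (pdf_mul_refl a b hab p.1 p.2).symm
    _ = ∫⁻ p in s, ρ p ∂volume := hvol.setLIntegral_comp_preimage hs hρm

lemma key_zero (α c : ℝ) (h : ℝ → ℝ) :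
    ∫ p : ℝ × ℝ, h (α * p.1 + c + p.2) * (p.1 - α * p.2) ∂stdGauss2 = 0 := by
  have hden : (α ^ 2 + 1) ≠ 0 := by positivity
  set a : ℝ := (α ^ 2 - 1) / (α ^ 2 + 1) with ha
  set b : ℝ := 2 * α / (α ^ 2 + 1) with hb
  have hab : a ^ 2 + b ^ 2 = 1 := by
    rw [ha, hb]; field_simp; ring
  set R := fun p : ℝ × ℝ => (a * p.1 + b * p.2, b * p.1 - a * p.2) with hRdef
  have hRm : Measurable R := by fun_prop
  have hinv : Function.Involutive R := by
    rintro ⟨u, x⟩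
    simp only [hRdef, Prod.mk.injEq]
    constructor
    · linear_combination u * hab
    · linear_combination x * hab
  set F : ℝ × ℝ → ℝ := fun p => h (α * p.1 + c + p.2) * (p.1 - α * p.2) with hF
  have hFR : ∀ p, F (R p) = -F p := by
    rintro ⟨u, x⟩
    have e1 : a * u + b * x - α * (b * u - a * x) = -(u - α * x) := by
      rw [ha, hb]; field_simp; ring
    have e2 : α * (a * u + b * x) + c + (b * u - a * x) = α * u + c + x := by
      rw [ha, hb]; field_simp; ring
    simp only [hF, hRdef]
    rw [e1, e2]; ring
  let Req : ℝ × ℝ ≃ᵐ ℝ × ℝ :=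
    { toEquiv := Function.Involutive.toPerm R hinv
      measurable_toFun := hRm
      measurable_invFun := hRm }
  have hmp := refl_gauss2_preserving a b hab
  have hmp' : MeasurePreserving (⇑Req) stdGauss2 stdGauss2 := hmp
  have hcomp : ∫ p, F (Req p) ∂stdGauss2 = ∫ p, F p ∂stdGauss2 :=
    hmp'.integral_comp Req.measurableEmbedding F
  have hReq : ∀ p, F (Req p) = F (R p) := fun p => rfl
  have hme : ∫ p, F p ∂stdGauss2 = -∫ p, F p ∂stdGauss2 := by
    calc ∫ p, F p ∂stdGauss2 = ∫ p, F (Req p) ∂stdGauss2 := hcomp.symm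
      _ = ∫ p, -F p ∂stdGauss2 :=
          integral_congr_ae (Filter.Eventually.of_forall fun p => hFR p)
      _ = -∫ p, F p ∂stdGauss2 := integral_neg _
  linarith

lemma integrable_id_gauss : Integrable (fun x : ℝ => x) (gaussianReal 0 1) := by
  rw [gauss_eq_withDensity,
    integrable_withDensity_iff (measurable_gaussianPDF 0 1)
      (Filter.Eventually.of_forall fun x => ENNReal.ofReal_lt_top)]
  have heq : (fun x : ℝ => x * ((gaussianPDF 0 1 x).toReal)) =
      fun x => (Real.sqrt (2 * π))⁻¹ * (x * Real.exp (-(1 / 2 : ℝ) * x ^ 2)) := by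
    funext x
    rw [gaussianPDF, ENNReal.toReal_ofReal (gaussianPDFReal_nonneg _ _ _), pdfReal_eq]
    ring_nf
  rw [heq]
  exact (integrable_mul_exp_neg_mul_sq (by norm_num : (0:ℝ) < 1 / 2)).const_mul _

lemma integral_id_gauss : ∫ x, x ∂(gaussianReal 0 1) = 0 := by
  rw [gauss_eq_withDensity]
  have hrepr : (volume : Measure ℝ).withDensity (gaussianPDF 0 1)
      = (volume : Measure ℝ).withDensity
          (fun x => ((((gaussianPDFReal 0 1 x).toNNReal : ℝ≥0)) : ℝ≥0∞)) := rfl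
  rw [hrepr, integral_withDensity_eq_integral_smul
    ((measurable_gaussianPDFReal 0 1).real_toNNReal) (fun x : ℝ => x)]
  set f : ℝ → ℝ := fun x => ((gaussianPDFReal 0 1 x).toNNReal : ℝ≥0) • x with hf
  have heven : ∀ x : ℝ, gaussianPDFReal 0 1 (-x) = gaussianPDFReal 0 1 x := by
    intro x; rw [pdfReal_eq, pdfReal_eq, neg_pow]; ring_nf
  have hodd : ∀ x : ℝ, f (-x) = -f x := by
    intro x
    simp only [hf, heven, smul_eq_mul, NNReal.smul_def]
    ring
  have h1 : ∫ x, f x ∂volume = -∫ x, f x ∂volume := by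
    calc ∫ x, f x ∂volume = ∫ x, f (-x) ∂volume := (integral_neg_eq_self f volume).symm
      _ = ∫ x, -f x ∂volume := by
          refine integral_congr_ae (Filter.Eventually.of_forall fun x => hodd x)
      _ = -∫ x, f x ∂volume := integral_neg _
  linarith




variable {Ω : Type*} [MeasurableSpace Ω] (μ : Measure Ω) [IsProbabilityMeasure μ]

lemma integrable_eps (ε : Ω → ℝ) (hm : Measurable ε)
    (hlaw : μ.map ε = gaussianReal 0 1) : Integrable ε μ := by
  have h := (integrable_map_measure (f := ε) (g := fun x : ℝ => x)
      (by rw [hlaw]; exact aestronglyMeasurable_id) hm.aemeasurable).mp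
    (by rw [hlaw]; exact integrable_id_gauss)
  exact h

lemma integral_eps (ε : Ω → ℝ) (hm : Measurable ε)
    (hlaw : μ.map ε = gaussianReal 0 1) : ∫ ω, ε ω ∂μ = 0 := by
  have h : ∫ x, x ∂(μ.map ε) = ∫ ω, ε ω ∂μ :=
    integral_map hm.aemeasurable (by rw [hlaw]; exact aestronglyMeasurable_id)
  rw [← h, hlaw, integral_id_gauss]

end Stmt13Aux

/-- Linear Gaussian model: `U = ε_U`, `X = α_U U + α₀ + ε_X`, `W = β_U U + β₀ + ε_W`,
`Y = γ_U U + γ_X X + γ₀ + ε_Y`, with i.i.d. standard normal noises and `α_U β_U ≠ 0`.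
With `b_w = ((α_U²+1)γ_X + γ_U α_U)/(β_U α_U)` and `b₀ = γ₀ + γ_X α₀ − b_w β₀`, one has
`E[Y|X] = E[b_w W + b₀ | X]` (conditional expectations given `σ(X)`). -/
theorem stmt13 {Ω : Type*} [MeasurableSpace Ω] (μ : Measure Ω) [IsProbabilityMeasure μ]
    (εU εX εW εY : Ω → ℝ)
    (hmU : Measurable εU) (hmX : Measurable εX) (hmW : Measurable εW) (hmY : Measurable εY)
    (hlawU : μ.map εU = gaussianReal 0 1) (hlawX : μ.map εX = gaussianReal 0 1)
    (hlawW : μ.map εW = gaussianReal 0 1) (hlawY : μ.map εY = gaussianReal 0 1)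
    (hindep : iIndepFun (m := fun _ : Fin 4 => (inferInstance : MeasurableSpace ℝ))
      ![εU, εX, εW, εY] μ)
    (αU α₀ βU β₀ γU γX γ₀ : ℝ) (hαβ : αU * βU ≠ 0)
    (X W Y : Ω → ℝ)
    (hX : X = fun ω => αU * εU ω + α₀ + εX ω)
    (hW : W = fun ω => βU * εU ω + β₀ + εW ω)
    (hY : Y = fun ω => γU * εU ω + γX * X ω + γ₀ + εY ω) :
    μ[Y | MeasurableSpace.comap X (inferInstance : MeasurableSpace ℝ)]
      =ᵐ[μ]
    μ[fun ω => ((αU ^ 2 + 1) * γX + γU * αU) / (βU * αU) * W ω +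
        (γ₀ + γX * α₀ - ((αU ^ 2 + 1) * γX + γU * αU) / (βU * αU) * β₀)
      | MeasurableSpace.comap X (inferInstance : MeasurableSpace ℝ)] := by
  classical
  have hαU : αU ≠ 0 := fun h => hαβ (by simp [h])
  have hβU : βU ≠ 0 := fun h => hαβ (by simp [h])
  set b : ℝ := ((αU ^ 2 + 1) * γX + γU * αU) / (βU * αU) with hbdef
  set b0 : ℝ := γ₀ + γX * α₀ - b * β₀ with hb0def
  set g : Ω → ℝ := fun ω => b * W ω + b0 with hgdef
  set T : Ω → ℝ := fun ω => εU ω - αU * εX ω with hTdef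
  set f : Ω → ℝ := fun ω => (-γX / αU) * T ω + (εY ω - b * εW ω) with hfdef
  have hXω : ∀ ω, X ω = αU * εU ω + α₀ + εX ω := fun ω => by rw [hX]
  have hWω : ∀ ω, W ω = βU * εU ω + β₀ + εW ω := fun ω => by rw [hW]
  have hYω : ∀ ω, Y ω = γU * εU ω + γX * X ω + γ₀ + εY ω := fun ω => by rw [hY]
  have hXm : Measurable X := by rw [hX]; fun_prop
  have hm : MeasurableSpace.comap X (inferInstance : MeasurableSpace ℝ)
      ≤ ‹MeasurableSpace Ω› := hXm.comap_le
  haveI : SigmaFinite (μ.trim hm) := inferInstance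
  have hIU : Integrable εU μ := Stmt13Aux.integrable_eps μ εU hmU hlawU
  have hIX : Integrable εX μ := Stmt13Aux.integrable_eps μ εX hmX hlawX
  have hIW : Integrable εW μ := Stmt13Aux.integrable_eps μ εW hmW hlawW
  have hIY : Integrable εY μ := Stmt13Aux.integrable_eps μ εY hmY hlawY
  have hIT : Integrable T μ := hIU.sub (hIX.const_mul αU)
  have hIf : Integrable f μ := (hIT.const_mul _).add (hIY.sub (hIW.const_mul b))
  have hIg : Integrable g μ := by
    have hgg : g = fun ω => b * βU * εU ω + (b * β₀ + b0) + b * εW ω := by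
      funext ω; rw [hgdef]; simp only []; rw [hWω ω]; ring
    rw [hgg]
    exact ((hIU.const_mul _).add (integrable_const _)).add (hIW.const_mul b)
  have hIYint : Integrable Y μ := by
    have hyy : Y = fun ω => (γU + γX * αU) * εU ω + γX * εX ω + (γ₀ + γX * α₀) + εY ω := by
      funext ω; rw [hYω ω, hXω ω]; ring
    rw [hyy]
    exact (((hIU.const_mul _).add (hIX.const_mul _)).add (integrable_const _)).add hIY
  have hYfg : Y = fun ω => f ω + g ω := by
    funext ω
    rw [hYω ω, hXω ω, hfdef, hgdef]
    simp only []
    rw [hWω ω, hTdef]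
    simp only []
    rw [hbdef, hb0def, hbdef]
    field_simp
    ring
  have hvec : ∀ i, Measurable (![εU, εX, εW, εY] i) := by
    intro i; fin_cases i <;> simpa
  have hUX : IndepFun εU εX μ := by
    simpa using hindep.indepFun (show (0 : Fin 4) ≠ 1 by decide)
  have hmap2 : μ.map (fun ω => (εU ω, εX ω)) = Stmt13Aux.stdGauss2 := by
    rw [(indepFun_iff_map_prod_eq_prod_map_map hmU.aemeasurable hmX.aemeasurable).mp hUX,
      hlawU, hlawX, Stmt13Aux.stdGauss2]
  have hpairY : IndepFun (fun ω => (εU ω, εX ω)) εY μ := by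
    simpa using hindep.indepFun_prodMk hvec 0 1 3 (by decide) (by decide)
  have hpairW : IndepFun (fun ω => (εU ω, εX ω)) εW μ := by
    simpa using hindep.indepFun_prodMk hvec 0 1 2 (by decide) (by decide)
  have hXcomp : X = (fun p : ℝ × ℝ => αU * p.1 + α₀ + p.2) ∘ (fun ω => (εU ω, εX ω)) := by
    rw [hX]; rfl
  have hXY : IndepFun X εY μ := by
    rw [hXcomp]; exact hpairY.comp (by fun_prop) measurable_id
  have hXW : IndepFun X εW μ := by
    rw [hXcomp]; exact hpairW.comp (by fun_prop) measurable_id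
  have hEY : ∫ ω, εY ω ∂μ = 0 := Stmt13Aux.integral_eps μ εY hmY hlawY
  have hEW : ∫ ω, εW ω ∂μ = 0 := Stmt13Aux.integral_eps μ εW hmW hlawW
  have hset : ∀ B : Set ℝ, MeasurableSet B → ∫ ω in X ⁻¹' B, f ω ∂μ = 0 := by
    intro B hB
    set ind : Ω → ℝ := fun ω => Set.indicator B (fun _ => (1 : ℝ)) (X ω) with hinddef
    have hindm : Measurable ind := (measurable_const.indicator hB).comp hXm
    have hindle : ∀ ω, ‖ind ω‖ ≤ 1 := by
      intro ω; rw [hinddef]; simp only []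
      by_cases hω : X ω ∈ B <;> simp [Set.indicator, hω]
    have hiT : Integrable (fun ω => ind ω * T ω) μ :=
      hIT.bdd_mul (c := 1) hindm.aestronglyMeasurable (Filter.Eventually.of_forall hindle)
    have hiY : Integrable (fun ω => ind ω * εY ω) μ :=
      hIY.bdd_mul (c := 1) hindm.aestronglyMeasurable (Filter.Eventually.of_forall hindle)
    have hiW : Integrable (fun ω => ind ω * εW ω) μ :=
      hIW.bdd_mul (c := 1) hindm.aestronglyMeasurable (Filter.Eventually.of_forall hindle)
    have hTzero : ∫ ω, ind ω * T ω ∂μ = 0 := by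
      have hFm : Measurable (fun p : ℝ × ℝ => Set.indicator B (fun _ => (1 : ℝ))
          (αU * p.1 + α₀ + p.2) * (p.1 - αU * p.2)) :=
        ((measurable_const.indicator hB).comp (by fun_prop)).mul (by fun_prop)
      have h1 : ∫ p, Set.indicator B (fun _ => (1 : ℝ)) (αU * p.1 + α₀ + p.2)
            * (p.1 - αU * p.2) ∂(μ.map (fun ω => (εU ω, εX ω)))
          = ∫ ω, ind ω * T ω ∂μ := by
        rw [integral_map (hmU.prodMk hmX).aemeasurable hFm.aestronglyMeasurable]
        refine integral_congr_ae (Filter.Eventually.of_forall fun ω => ?_)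
        simp only [hinddef, hTdef, hXω ω]
      rw [← h1, hmap2]
      exact Stmt13Aux.key_zero αU α₀ _
    have hYzero : ∫ ω, ind ω * εY ω ∂μ = 0 := by
      have hIndY : IndepFun ind εY μ :=
        hXY.comp (measurable_const.indicator hB) measurable_id
      have hmul := hIndY.integral_fun_mul_eq_mul_integral hindm.aestronglyMeasurable hmY.aestronglyMeasurable
      calc ∫ ω, ind ω * εY ω ∂μ = (∫ ω, ind ω ∂μ) * ∫ ω, εY ω ∂μ := hmul
        _ = 0 := by rw [hEY, mul_zero]
    have hWzero : ∫ ω, ind ω * εW ω ∂μ = 0 := by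
      have hIndW : IndepFun ind εW μ :=
        hXW.comp (measurable_const.indicator hB) measurable_id
      have hmul := hIndW.integral_fun_mul_eq_mul_integral hindm.aestronglyMeasurable hmW.aestronglyMeasurable
      calc ∫ ω, ind ω * εW ω ∂μ = (∫ ω, ind ω ∂μ) * ∫ ω, εW ω ∂μ := hmul
        _ = 0 := by rw [hEW, mul_zero]
    rw [← integral_indicator (hXm hB)]
    have hsplit : Set.indicator (X ⁻¹' B) f =
        fun ω => (-γX / αU) * (ind ω * T ω) + (ind ω * εY ω - b * (ind ω * εW ω)) := by
      funext ω
      by_cases hω : X ω ∈ B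
      · rw [Set.indicator_of_mem (show ω ∈ X ⁻¹' B from hω)]
        have h1 : ind ω = 1 := by rw [hinddef]; simp [Set.indicator_of_mem hω]
        rw [hfdef, h1]; simp only []; ring
      · rw [Set.indicator_of_notMem (show ω ∉ X ⁻¹' B from hω)]
        have h1 : ind ω = 0 := by rw [hinddef]; simp [Set.indicator_of_notMem hω]
        rw [h1]; ring
    have hA : Integrable (fun ω => (-γX / αU) * (ind ω * T ω)) μ := hiT.const_mul _
    have hBint : Integrable (fun ω => ind ω * εY ω - b * (ind ω * εW ω)) μ :=
      hiY.sub (hiW.const_mul b)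
    have hC : Integrable (fun ω => b * (ind ω * εW ω)) μ := hiW.const_mul b
    rw [hsplit, integral_add hA hBint, integral_const_mul, integral_sub hiY hC,
      integral_const_mul, hTzero, hYzero, hWzero]
    ring
  have h0 : (fun _ : Ω => (0 : ℝ)) =ᵐ[μ]
      μ[f|MeasurableSpace.comap X (inferInstance : MeasurableSpace ℝ)] := by
    refine ae_eq_condExp_of_forall_setIntegral_eq hm hIf
      (fun s _ _ => (integrable_const (0 : ℝ)).integrableOn)
      (fun s hs _ => ?_) ?_
    · obtain ⟨B, hB, rfl⟩ := hs
      simp only [integral_zero]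
      exact (hset B hB).symm
    · exact stronglyMeasurable_const.aestronglyMeasurable
  have hadd : μ[Y|MeasurableSpace.comap X (inferInstance : MeasurableSpace ℝ)] =ᵐ[μ]
      μ[f|MeasurableSpace.comap X (inferInstance : MeasurableSpace ℝ)]
        + μ[g|MeasurableSpace.comap X (inferInstance : MeasurableSpace ℝ)] := by
    rw [hYfg]
    exact condExp_add hIf hIg _
  refine hadd.trans ?_
  filter_upwards [h0] with ω h0ω
  simp only [Pi.add_apply, ← h0ω, zero_add]
end

section
/- In the linear Gaussian model U = ε_U, X = α_U U + α₀ + ε_X, W = β_U U + β₀ + ε_W, Y = γ_U U + γ₀ + ε_Y with i.i.d. standard normal noises and β_U ≠ 0, set ρ = γ_U/β_U and assume 1 − ρ² > 0. Then the bridge function h(w,y) = (1−ρ²)^{-1/2} φ((y − ρw + ρβ₀ − γ₀)/√(1−ρ²)) satisfies ∫ (∫ |h(w,y)|² p(w) dw)^{1/2} dy = ((β_U² + γ_U² + 2β_U²γ_U²)/(β_U² − γ_U²))^{1/4} < ∞, i.e. h is Bochner integrable. -/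
open MeasureTheory

lemma gauss_shift (b μ : ℝ) :
    ∫ x : ℝ, Real.exp (-(b * (x - μ) ^ 2)) = Real.sqrt (Real.pi / b) := by
  have h : ∀ x : ℝ, Real.exp (-(b * (x - μ) ^ 2)) = (fun t : ℝ => Real.exp (-b * t ^ 2)) (x - μ) := by
    intro x; simp [neg_mul]
  simp_rw [h]
  rw [integral_sub_right_eq_self (fun t : ℝ => Real.exp (-b * t ^ 2)) μ]
  exact integral_gaussian b

/-- Bochner integrability of the bridge function in the linear Gaussian model:
with `ρ = γ_U/β_U`, `1 - ρ² > 0`, `W ~ N(β₀, 1 + β_U²)` with density `p`, and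
`h(w,y) = (1-ρ²)^{-1/2} φ((y - ρw + ρβ₀ - γ₀)/√(1-ρ²))`, one has
`∫ (∫ h(w,y)² p(w) dw)^{1/2} dy = ((β_U² + γ_U² + 2β_U²γ_U²)/(β_U² - γ_U²))^{1/4}`. -/
theorem stmt14 (βU β₀ γU γ₀ : ℝ) (hβU : βU ≠ 0)
    (hρ : 0 < 1 - (γU / βU) ^ 2) :
    ∫ y : ℝ, Real.sqrt (∫ w : ℝ,
        ((Real.sqrt (1 - (γU / βU) ^ 2))⁻¹ *
          stdNormalPDF ((y - (γU / βU) * w + (γU / βU) * β₀ - γ₀) /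
            Real.sqrt (1 - (γU / βU) ^ 2))) ^ 2
        * ((Real.sqrt (1 + βU ^ 2))⁻¹ * stdNormalPDF ((w - β₀) / Real.sqrt (1 + βU ^ 2))))
      = ((βU ^ 2 + γU ^ 2 + 2 * βU ^ 2 * γU ^ 2) / (βU ^ 2 - γU ^ 2)) ^ ((1 : ℝ) / 4) := by
  have hπ : 0 < Real.pi := Real.pi_pos
  set ρ : ℝ := γU / βU with hρdef
  set s2 : ℝ := 1 - ρ ^ 2 with hs2
  have hs2pos : 0 < s2 := hρ
  set σ2 : ℝ := 1 + βU ^ 2 with hσ2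
  have hσ2pos : 0 < σ2 := by positivity
  set c : ℝ := ρ * β₀ - γ₀ with hc
  set A : ℝ := ρ ^ 2 / s2 + 1 / (2 * σ2) with hA
  have hApos : 0 < A := by positivity
  set k : ℝ := 1 / (s2 * (2 * σ2) * A) with hk
  have hkpos : 0 < k := by rw [hk]; positivity
  set C0 : ℝ := s2⁻¹ * (2 * Real.pi)⁻¹ * (Real.sqrt σ2)⁻¹ * (Real.sqrt (2 * Real.pi))⁻¹ with hC0
  have hC0pos : 0 < C0 := by
    rw [hC0]
    have := Real.sqrt_pos.mpr hσ2pos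
    have := Real.sqrt_pos.mpr (by positivity : (0:ℝ) < 2 * Real.pi)
    positivity
  set m : ℝ → ℝ := fun y => ((ρ * (y + c)) / s2 + β₀ / (2 * σ2)) / A with hm
  -- pointwise identity for the inner integrand
  have key : ∀ y w : ℝ,
      ((Real.sqrt s2)⁻¹ * stdNormalPDF ((y - ρ * w + ρ * β₀ - γ₀) / Real.sqrt s2)) ^ 2
        * ((Real.sqrt σ2)⁻¹ * stdNormalPDF ((w - β₀) / Real.sqrt σ2))
      = (C0 * Real.exp (-(k * (y - γ₀) ^ 2))) * Real.exp (-(A * (w - m y) ^ 2)) := by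
    intro y w
    have merging : Real.exp (-(k * (y - γ₀) ^ 2)) * Real.exp (-(A * (w - m y) ^ 2))
        = Real.exp (-((y - ρ * w + ρ * β₀ - γ₀) ^ 2 / s2))
          * Real.exp (-((w - β₀) ^ 2 / (2 * σ2))) := by
      rw [← Real.exp_add, ← Real.exp_add]
      congr 1
      rw [hm, hk, hc, hA]
      have hA0 : ρ ^ 2 / s2 + 1 / (2 * σ2) ≠ 0 := by positivity
      field_simp
      ring
    have e1 : ((y - ρ * w + ρ * β₀ - γ₀) / Real.sqrt s2) ^ 2
        = (y - ρ * w + ρ * β₀ - γ₀) ^ 2 / s2 := by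
      rw [div_pow, Real.sq_sqrt hs2pos.le]
    have e2 : ((w - β₀) / Real.sqrt σ2) ^ 2 = (w - β₀) ^ 2 / σ2 := by
      rw [div_pow, Real.sq_sqrt hσ2pos.le]
    have i1 : ((Real.sqrt s2)⁻¹) ^ 2 = s2⁻¹ := by
      rw [inv_pow, Real.sq_sqrt hs2pos.le]
    have i2 : ((Real.sqrt (2 * Real.pi))⁻¹) ^ 2 = (2 * Real.pi)⁻¹ := by
      rw [inv_pow, Real.sq_sqrt (by positivity)]
    have ee : ∀ u : ℝ, Real.exp (-u / 2) ^ 2 = Real.exp (-u) := by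
      intro u
      rw [sq, ← Real.exp_add]
      congr 1; ring
    have e2' : Real.exp (-((w - β₀) ^ 2 / σ2) / 2) = Real.exp (-((w - β₀) ^ 2 / (2 * σ2))) := by
      congr 1
      rw [neg_div, div_div, mul_comm σ2 2]
    rw [mul_assoc, merging]
    simp only [stdNormalPDF, e1, e2]
    rw [mul_pow, mul_pow, i1, i2, ee, e2']
    rw [hC0]
    ring
  -- inner integral
  have inner : ∀ y : ℝ,
      (∫ w : ℝ, ((Real.sqrt s2)⁻¹ * stdNormalPDF ((y - ρ * w + ρ * β₀ - γ₀) / Real.sqrt s2)) ^ 2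
        * ((Real.sqrt σ2)⁻¹ * stdNormalPDF ((w - β₀) / Real.sqrt σ2)))
      = (C0 * Real.sqrt (Real.pi / A)) * Real.exp (-(k * (y - γ₀) ^ 2)) := by
    intro y
    simp_rw [key y]
    rw [integral_const_mul, gauss_shift A (m y)]
    ring
  have sqrt_inner : ∀ y : ℝ,
      Real.sqrt ((C0 * Real.sqrt (Real.pi / A)) * Real.exp (-(k * (y - γ₀) ^ 2)))
      = Real.sqrt (C0 * Real.sqrt (Real.pi / A)) * Real.exp (-(k / 2 * (y - γ₀) ^ 2)) := by
    intro y
    rw [Real.sqrt_mul (by positivity)]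
    congr 1
    rw [← Real.exp_half]
    congr 1; ring
  have outer : (∫ y : ℝ, Real.sqrt (∫ w : ℝ,
        ((Real.sqrt s2)⁻¹ * stdNormalPDF ((y - ρ * w + ρ * β₀ - γ₀) / Real.sqrt s2)) ^ 2
        * ((Real.sqrt σ2)⁻¹ * stdNormalPDF ((w - β₀) / Real.sqrt σ2))))
      = Real.sqrt (C0 * Real.sqrt (Real.pi / A)) * Real.sqrt (Real.pi / (k / 2)) := by
    simp_rw [inner, sqrt_inner]
    rw [integral_const_mul, gauss_shift (k / 2) γ₀]
  rw [outer]
  -- final algebra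
  set L : ℝ := Real.sqrt (C0 * Real.sqrt (Real.pi / A)) * Real.sqrt (Real.pi / (k / 2)) with hL
  have hLnn : 0 ≤ L := by rw [hL]; positivity
  have hE : 0 < βU ^ 2 - γU ^ 2 := by
    have hb2 : 0 < βU ^ 2 := by positivity
    have h1 : γU ^ 2 / βU ^ 2 < 1 := by
      have h2 := hs2pos
      rw [hs2, hρdef, div_pow] at h2; linarith
    have := (div_lt_one hb2).mp h1
    linarith
  have hC0sq : C0 ^ 2 = (s2 ^ 2)⁻¹ * ((2 * Real.pi) ^ 2)⁻¹ * σ2⁻¹ * (2 * Real.pi)⁻¹ := by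
    rw [hC0, mul_pow, mul_pow, mul_pow, inv_pow, inv_pow, inv_pow, inv_pow,
      Real.sq_sqrt hσ2pos.le, Real.sq_sqrt (by positivity : (0:ℝ) ≤ 2 * Real.pi)]
  have hL4 : L ^ 4 = (βU ^ 2 + γU ^ 2 + 2 * βU ^ 2 * γU ^ 2) / (βU ^ 2 - γU ^ 2) := by
    have hsq : L ^ 2 = (C0 * Real.sqrt (Real.pi / A)) * (Real.pi / (k / 2)) := by
      rw [hL, mul_pow, Real.sq_sqrt (by positivity), Real.sq_sqrt (by positivity)]
    have h4 : L ^ 4 = (C0 * Real.sqrt (Real.pi / A)) ^ 2 * (Real.pi / (k / 2)) ^ 2 := by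
      rw [show L ^ 4 = (L ^ 2) ^ 2 by ring, hsq, mul_pow]
    rw [h4, mul_pow, Real.sq_sqrt (by positivity : (0:ℝ) ≤ Real.pi / A), hC0sq]
    rw [hk, hA, hs2, hσ2, hρdef]
    have h1 : (γU / βU) ^ 2 / (1 - (γU / βU) ^ 2) + 1 / (2 * (1 + βU ^ 2)) ≠ 0 := by
      rw [← hρdef, ← hs2, ← hσ2, ← hA]; exact hApos.ne'
    field_simp
    ring
  rw [show ((1 : ℝ) / 4) = (((4 : ℕ) : ℝ))⁻¹ by norm_num, ← hL4,
    Real.pow_rpow_inv_natCast hLnn (by norm_num)]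
end

section
/- Let He_n denote the probabilist's Hermite polynomials. For |t| < 1 and real x, y, the Mehler series Σ_{n≥0} (tⁿ/n!) He_n(x) He_n(y) converges and equals (1−t²)^{-1/2} exp((txy − (t²/2)(x² + y²))/(1−t²)). -/
open MeasureTheory Filter Real Set Polynomial
open scoped Nat

/-- The probabilist's Hermite polynomial `He_n` evaluated at a real number. -/
noncomputable def hermiteEval (n : ℕ) (x : ℝ) : ℝ :=
  Polynomial.aeval x (Polynomial.hermite n)

namespace Mehler

lemma derivative_hermite (n : ℕ) :
    Polynomial.derivative (Polynomial.hermite (n + 1)) = ((n : Polynomial ℤ) + 1) * Polynomial.hermite n := by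
  induction n with
  | zero => simp [Polynomial.hermite_one, Polynomial.hermite_zero]
  | succ n ih =>
    rw [Polynomial.hermite_succ (n + 1), Polynomial.derivative_sub, Polynomial.derivative_mul,
      Polynomial.derivative_X, ih, one_mul, Polynomial.derivative_mul]
    rw [Polynomial.hermite_succ n]
    push_cast
    simp only [Polynomial.derivative_add, Polynomial.derivative_natCast, Polynomial.derivative_one]
    ring

lemma hermiteEval_zero (x : ℝ) : hermiteEval 0 x = 1 := by
  simp [hermiteEval, Polynomial.hermite_zero]

lemma hermiteEval_one (x : ℝ) : hermiteEval 1 x = x := by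
  simp [hermiteEval, Polynomial.hermite_one]

lemma hermiteEval_rec (n : ℕ) (x : ℝ) :
    hermiteEval (n + 2) x = x * hermiteEval (n + 1) x - (n + 1) * hermiteEval n x := by
  unfold hermiteEval
  rw [Polynomial.hermite_succ (n + 1), derivative_hermite n, map_sub, map_mul, map_mul]
  simp [Polynomial.aeval_X]

end Mehler
section Helpers

open Complex

variable {x : ℝ}

lemma Mehler.integrable_abspow (m : ℕ) {b : ℝ} (hb : 0 < b) :
    Integrable (fun s : ℝ => |s| ^ m * Real.exp (-b * s ^ 2)) := by
  have h := (integrable_rpow_mul_exp_neg_mul_sq hb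
    (s := (m : ℝ)) (lt_of_lt_of_le neg_one_lt_zero (Nat.cast_nonneg m))).abs
  simp_rw [Real.rpow_natCast] at h
  refine h.congr (Eventually.of_forall fun s => ?_)
  simp [abs_mul, abs_pow, abs_of_pos (Real.exp_pos _)]

lemma Mehler.integrable_bound (c : ℝ) (m : ℕ) {b : ℝ} (hb : 0 < b) :
    Integrable (fun s : ℝ => (c + |s|) ^ m * Real.exp (-b * s ^ 2)) := by
  have : (fun s : ℝ => (c + |s|) ^ m * Real.exp (-b * s ^ 2))
      = fun s => ∑ k ∈ Finset.range (m + 1),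
        (c ^ k * (m.choose k : ℝ)) * (|s| ^ (m - k) * Real.exp (-b * s ^ 2)) := by
    funext s
    rw [add_pow, Finset.sum_mul]
    refine Finset.sum_congr rfl fun k _ => by ring
  rw [this]
  exact integrable_finset_sum _ fun k _ => (Mehler.integrable_abspow (m - k) hb).const_mul _

lemma Mehler.integrable_bound' (c : ℝ) (m : ℕ) :
    Integrable (fun s : ℝ => (c + |s|) ^ m * Real.exp (-s ^ 2 / 2)) := by
  have h := Mehler.integrable_bound c m (b := 1/2) (by norm_num)
  refine h.congr (Eventually.of_forall fun s => ?_)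
  ring_nf

lemma Mehler.norm_line_le (x s : ℝ) : ‖((x : ℂ) + s * I)‖ ≤ |x| + |s| := by
  refine (norm_add_le _ _).trans ?_
  simp [Complex.norm_real]

lemma Mehler.norm_pow_line_le (x s : ℝ) (n : ℕ) :
    ‖((x : ℂ) + s * I) ^ n‖ ≤ (|x| + |s|) ^ n := by
  rw [norm_pow]
  exact pow_le_pow_left₀ (norm_nonneg _) (Mehler.norm_line_le x s) n

lemma Mehler.cont_main (x : ℝ) (n k : ℕ) :
    Continuous (fun s : ℝ => (s : ℂ) ^ k * ((x : ℂ) + s * I) ^ n * (Real.exp (-s ^ 2 / 2) : ℂ)) := by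
  fun_prop

lemma Mehler.norm_main (x : ℝ) (n k : ℕ) (s : ℝ) :
    ‖(s : ℂ) ^ k * ((x : ℂ) + s * I) ^ n * (Real.exp (-s ^ 2 / 2) : ℂ)‖
      ≤ (|x| + |s|) ^ (n + k) * Real.exp (-s ^ 2 / 2) := by
  rw [norm_mul, norm_mul, norm_pow, Complex.norm_real, Complex.norm_real,
    Real.norm_eq_abs, Real.norm_eq_abs, abs_of_pos (Real.exp_pos _), pow_add]
  have h1 : |s| ^ k ≤ (|x| + |s|) ^ k :=
    pow_le_pow_left₀ (abs_nonneg _) (by simp [abs_nonneg]) k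
  have h2 := Mehler.norm_pow_line_le x s n
  calc |s| ^ k * ‖((x : ℂ) + s * I) ^ n‖ * Real.exp (-s ^ 2 / 2)
      ≤ (|x| + |s|) ^ k * (|x| + |s|) ^ n * Real.exp (-s ^ 2 / 2) := by
        apply mul_le_mul_of_nonneg_right _ (Real.exp_pos _).le
        exact mul_le_mul h1 h2 (norm_nonneg _) (by positivity)
      _ = (|x| + |s|) ^ n * (|x| + |s|) ^ k * Real.exp (-s ^ 2 / 2) := by ring

lemma Mehler.integrable_main (x : ℝ) (n k : ℕ) :
    Integrable (fun s : ℝ => (s : ℂ) ^ k * ((x : ℂ) + s * I) ^ n * (Real.exp (-s ^ 2 / 2) : ℂ)) := by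
  refine Integrable.mono' (Mehler.integrable_bound' |x| (n + k))
    (Mehler.cont_main x n k).aestronglyMeasurable
    (Eventually.of_forall fun s => Mehler.norm_main x n k s)

lemma Mehler.tendsto_bound_atTop (c : ℝ) (hc : 0 ≤ c) (m : ℕ) :
    Tendsto (fun s : ℝ => (c + |s|) ^ m * Real.exp (-s ^ 2 / 2)) atTop (nhds 0) := by
  have hg : Tendsto (fun s : ℝ => (2:ℝ) ^ m * (s ^ m * Real.exp (-s))) atTop (nhds 0) := by
    simpa using (tendsto_pow_mul_exp_neg_atTop_nhds_zero m).const_mul ((2:ℝ) ^ m)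
  refine squeeze_zero' (Eventually.of_forall fun s => by positivity) ?_ hg
  filter_upwards [eventually_ge_atTop (max c 2)] with s hs
  have hs2 : (2:ℝ) ≤ s := le_trans (le_max_right _ _) hs
  have hsc : c ≤ s := le_trans (le_max_left _ _) hs
  have hs0 : (0:ℝ) ≤ s := by linarith
  have habs : |s| = s := abs_of_nonneg hs0
  have h1 : (c + |s|) ^ m ≤ (2 * s) ^ m := by
    apply pow_le_pow_left₀ (by positivity)
    rw [habs]; linarith
  have h2 : Real.exp (-s ^ 2 / 2) ≤ Real.exp (-s) := by
    apply Real.exp_le_exp.mpr; nlinarith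
  calc (c + |s|) ^ m * Real.exp (-s ^ 2 / 2) ≤ (2 * s) ^ m * Real.exp (-s) := by
        apply mul_le_mul h1 h2 (Real.exp_pos _).le (by positivity)
    _ = (2:ℝ) ^ m * (s ^ m * Real.exp (-s)) := by rw [mul_pow]; ring

lemma Mehler.tendsto_bound_atBot (c : ℝ) (hc : 0 ≤ c) (m : ℕ) :
    Tendsto (fun s : ℝ => (c + |s|) ^ m * Real.exp (-s ^ 2 / 2)) atBot (nhds 0) := by
  have h := (Mehler.tendsto_bound_atTop c hc m).comp tendsto_neg_atBot_atTop
  refine h.congr fun s => ?_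
  simp [Function.comp, abs_neg, neg_sq]

end Helpers
section Parts

open Complex

lemma Mehler.integral_deriv_zero {F F' : ℝ → ℂ}
    (hF : ∀ s, HasDerivAt F (F' s) s) (hF' : Integrable F')
    (htop : Tendsto F atTop (nhds 0)) (hbot : Tendsto F atBot (nhds 0)) :
    ∫ s : ℝ, F' s = 0 := by
  have h1 := MeasureTheory.integral_Ioi_of_hasDerivAt_of_tendsto'
    (a := 0) (fun s _ => hF s) hF'.integrableOn htop
  have h2 := MeasureTheory.integral_Iic_of_hasDerivAt_of_tendsto'
    (a := 0) (fun s _ => hF s) hF'.integrableOn hbot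
  rw [← intervalIntegral.integral_Iic_add_Ioi (b := 0) hF'.integrableOn hF'.integrableOn, h1, h2]
  ring

lemma Mehler.hasDerivAt_line (x s : ℝ) :
    HasDerivAt (fun s : ℝ => (x : ℂ) + s * I) I s := by
  have h : HasDerivAt (fun s : ℝ => (s : ℂ)) 1 s := by
    exact Complex.ofRealCLM.hasDerivAt (x := s)
  simpa using (h.mul_const I).const_add (x : ℂ)

lemma Mehler.hasDerivAt_gauss (s : ℝ) :
    HasDerivAt (fun s : ℝ => (Real.exp (-s ^ 2 / 2) : ℂ))
      ((-s * Real.exp (-s ^ 2 / 2) : ℝ) : ℂ) s := by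
  have h1 : HasDerivAt (fun s : ℝ => -s ^ 2 / 2) (-s) s := by
    have := ((hasDerivAt_pow 2 s).neg).div_const 2
    refine this.congr_deriv ?_
    simp; ring
  have h2 : HasDerivAt (fun s : ℝ => Real.exp (-s ^ 2 / 2)) (-s * Real.exp (-s ^ 2 / 2)) s := by
    have := h1.exp
    convert this using 1
    ring
  exact h2.ofReal_comp

lemma Mehler.parts (x : ℝ) (n : ℕ) :
    ∫ s : ℝ, (s : ℂ) * ((x : ℂ) + s * I) ^ (n + 1) * (Real.exp (-s ^ 2 / 2) : ℂ)
      = ((n : ℂ) + 1) * I * ∫ s : ℝ, ((x : ℂ) + s * I) ^ n * (Real.exp (-s ^ 2 / 2) : ℂ) := by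
  set F : ℝ → ℂ := fun s => -(((x : ℂ) + s * I) ^ (n + 1) * (Real.exp (-s ^ 2 / 2) : ℂ)) with hFdef
  set F' : ℝ → ℂ := fun s => (s : ℂ) * ((x : ℂ) + s * I) ^ (n + 1) * (Real.exp (-s ^ 2 / 2) : ℂ)
      - ((n : ℂ) + 1) * I * (((x : ℂ) + s * I) ^ n * (Real.exp (-s ^ 2 / 2) : ℂ)) with hF'def
  have hderiv : ∀ s, HasDerivAt F (F' s) s := by
    intro s
    have hg : HasDerivAt (fun s : ℝ => ((x : ℂ) + s * I) ^ (n + 1))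
        ((n + 1 : ℕ) * ((x : ℂ) + s * I) ^ n * I) s := by
      have := (hasDerivAt_pow (n + 1) ((x : ℂ) + s * I)).comp s (Mehler.hasDerivAt_line x s)
      simp [Function.comp_def] at this ⊢; exact this
    have := (hg.mul (Mehler.hasDerivAt_gauss s)).neg
    refine this.congr_deriv ?_
    simp only [hF'def]
    push_cast
    ring
  have hint1 := Mehler.integrable_main x (n + 1) 1
  simp_rw [pow_one] at hint1
  have hint0 := Mehler.integrable_main x n 0
  simp_rw [pow_zero, one_mul] at hint0
  have hF'int : Integrable F' := hint1.sub (hint0.const_mul _)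
  have hnorm : ∀ s : ℝ, ‖F s‖ ≤ (|x| + |s|) ^ (n + 1) * Real.exp (-s ^ 2 / 2) := by
    intro s
    have := Mehler.norm_main x (n + 1) 0 s
    simpa [hFdef] using this
  have htop : Tendsto F atTop (nhds 0) :=
    squeeze_zero_norm hnorm (Mehler.tendsto_bound_atTop |x| (abs_nonneg x) (n + 1))
  have hbot : Tendsto F atBot (nhds 0) :=
    squeeze_zero_norm hnorm (Mehler.tendsto_bound_atBot |x| (abs_nonneg x) (n + 1))
  have h0 := Mehler.integral_deriv_zero hderiv hF'int htop hbot
  rw [hF'def] at h0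
  rw [MeasureTheory.integral_sub hint1 (hint0.const_mul _)] at h0
  rw [integral_const_mul] at h0
  linear_combination h0

end Parts
section GaussHermite

open Complex

lemma Mehler.integral_gauss_complex :
    ∫ s : ℝ, (Real.exp (-s ^ 2 / 2) : ℂ) = ((Real.sqrt (2 * π) : ℝ) : ℂ) := by
  have h : ∫ s : ℝ, Real.exp (-s ^ 2 / 2) = Real.sqrt (2 * π) := by
    have h := integral_gaussian (1/2)
    simp_rw [show ∀ s : ℝ, -(1/2 : ℝ) * s ^ 2 = -s ^ 2 / 2 by intro s; ring] at h
    rw [h, show π / (1/2) = 2 * π by ring]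
  rw [← h]
  exact integral_ofReal

lemma Mehler.integral_odd_gauss : ∫ s : ℝ, (s : ℂ) * (Real.exp (-s ^ 2 / 2) : ℂ) = 0 := by
  have hint : Integrable (fun s : ℝ => (s : ℂ) * (Real.exp (-s ^ 2 / 2) : ℂ)) := by
    have h := Mehler.integrable_main 0 0 1
    simpa using h
  refine Mehler.integral_deriv_zero (F := fun s : ℝ => -(Real.exp (-s ^ 2 / 2) : ℂ))
    (fun s => ?_) hint ?_ ?_
  · have := (Mehler.hasDerivAt_gauss s).neg
    refine this.congr_deriv ?_
    push_cast
    ring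
  · have hb := Mehler.tendsto_bound_atTop 0 le_rfl 0
    refine squeeze_zero_norm (fun s => ?_) hb
    rw [norm_neg, Complex.norm_real, Real.norm_eq_abs, abs_of_pos (Real.exp_pos _)]
    simp
  · have hb := Mehler.tendsto_bound_atBot 0 le_rfl 0
    refine squeeze_zero_norm (fun s => ?_) hb
    rw [norm_neg, Complex.norm_real, Real.norm_eq_abs, abs_of_pos (Real.exp_pos _)]
    simp

lemma Mehler.gauss_hermite (x : ℝ) : ∀ n : ℕ,
    ∫ s : ℝ, ((x : ℂ) + s * I) ^ n * (Real.exp (-s ^ 2 / 2) : ℂ)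
      = ((hermiteEval n x * Real.sqrt (2 * π) : ℝ) : ℂ) := by
  have base0 : ∫ s : ℝ, ((x : ℂ) + s * I) ^ 0 * (Real.exp (-s ^ 2 / 2) : ℂ)
      = ((hermiteEval 0 x * Real.sqrt (2 * π) : ℝ) : ℂ) := by
    simp_rw [pow_zero, one_mul]
    rw [Mehler.integral_gauss_complex, Mehler.hermiteEval_zero, one_mul]
  have base1 : ∫ s : ℝ, ((x : ℂ) + s * I) ^ 1 * (Real.exp (-s ^ 2 / 2) : ℂ)
      = ((hermiteEval 1 x * Real.sqrt (2 * π) : ℝ) : ℂ) := by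
    have hsplit : (fun s : ℝ => ((x : ℂ) + s * I) ^ 1 * (Real.exp (-s ^ 2 / 2) : ℂ))
        = fun s : ℝ => (x : ℂ) * (Real.exp (-s ^ 2 / 2) : ℂ)
            + ((s : ℂ) * (Real.exp (-s ^ 2 / 2) : ℂ)) * I := by
      funext s; ring
    have hint0 : Integrable (fun s : ℝ => (x : ℂ) * (Real.exp (-s ^ 2 / 2) : ℂ)) := by
      have h := (Mehler.integrable_main x 0 0).const_mul (x : ℂ)
      simpa using h
    have hint1 : Integrable (fun s : ℝ => ((s : ℂ) * (Real.exp (-s ^ 2 / 2) : ℂ)) * I) := by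
      have h := (Mehler.integrable_main 0 0 1).mul_const I
      simpa using h
    rw [hsplit, MeasureTheory.integral_add hint0 hint1, integral_const_mul,
      MeasureTheory.integral_mul_const, Mehler.integral_odd_gauss,
      Mehler.integral_gauss_complex, Mehler.hermiteEval_one]
    push_cast
    ring
  have step : ∀ n : ℕ,
      (∫ s : ℝ, ((x : ℂ) + s * I) ^ n * (Real.exp (-s ^ 2 / 2) : ℂ)
        = ((hermiteEval n x * Real.sqrt (2 * π) : ℝ) : ℂ)) →
      (∫ s : ℝ, ((x : ℂ) + s * I) ^ (n + 1) * (Real.exp (-s ^ 2 / 2) : ℂ)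
        = ((hermiteEval (n + 1) x * Real.sqrt (2 * π) : ℝ) : ℂ)) →
      ∫ s : ℝ, ((x : ℂ) + s * I) ^ (n + 2) * (Real.exp (-s ^ 2 / 2) : ℂ)
        = ((hermiteEval (n + 2) x * Real.sqrt (2 * π) : ℝ) : ℂ) := by
    intro n ih0 ih1
    have hsplit : (fun s : ℝ => ((x : ℂ) + s * I) ^ (n + 2) * (Real.exp (-s ^ 2 / 2) : ℂ))
        = fun s : ℝ => (x : ℂ) * (((x : ℂ) + s * I) ^ (n + 1) * (Real.exp (-s ^ 2 / 2) : ℂ))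
            + ((s : ℂ) * ((x : ℂ) + s * I) ^ (n + 1) * (Real.exp (-s ^ 2 / 2) : ℂ)) * I := by
      funext s; ring
    have hint0 : Integrable (fun s : ℝ =>
        (x : ℂ) * (((x : ℂ) + s * I) ^ (n + 1) * (Real.exp (-s ^ 2 / 2) : ℂ))) := by
      have h := (Mehler.integrable_main x (n + 1) 0).const_mul (x : ℂ)
      simpa using h
    have hint1 : Integrable (fun s : ℝ =>
        ((s : ℂ) * ((x : ℂ) + s * I) ^ (n + 1) * (Real.exp (-s ^ 2 / 2) : ℂ)) * I) := by
      have h := (Mehler.integrable_main x (n + 1) 1).mul_const I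
      simpa [pow_one] using h
    rw [hsplit, MeasureTheory.integral_add hint0 hint1, integral_const_mul,
      MeasureTheory.integral_mul_const, Mehler.parts x n, ih0, ih1, Mehler.hermiteEval_rec]
    push_cast
    ring_nf
    rw [Complex.I_sq]
    ring
  intro n
  induction n using Nat.twoStepInduction with
  | zero => exact base0
  | one => exact base1
  | more n ih0 ih1 => exact step n ih0 ih1

end GaussHermite
section Main

open Complex

namespace Mehler

variable (t x y : ℝ)

noncomputable def Fn (n : ℕ) (p : ℝ × ℝ) : ℂ :=
  (t : ℂ) ^ n / (n ! : ℂ) * ((((x : ℂ) + p.1 * I) ^ n * (Real.exp (-p.1 ^ 2 / 2) : ℂ))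
    * (((y : ℂ) + p.2 * I) ^ n * (Real.exp (-p.2 ^ 2 / 2) : ℂ)))

noncomputable def Ff (p : ℝ × ℝ) : ℂ :=
  Complex.exp ((t : ℂ) * ((x : ℂ) + p.1 * I) * ((y : ℂ) + p.2 * I))
    * ((Real.exp (-p.1 ^ 2 / 2) : ℂ) * (Real.exp (-p.2 ^ 2 / 2) : ℂ))

noncomputable def Bd (n : ℕ) (p : ℝ × ℝ) : ℝ :=
  |t| ^ n / (n !) * (((|x| + |p.1|) ^ n * Real.exp (-p.1 ^ 2 / 2))
    * ((|y| + |p.2|) ^ n * Real.exp (-p.2 ^ 2 / 2)))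

noncomputable def BdSum (p : ℝ × ℝ) : ℝ :=
  Real.exp (|t| * ((|x| + |p.1|) * (|y| + |p.2|)))
    * (Real.exp (-p.1 ^ 2 / 2) * Real.exp (-p.2 ^ 2 / 2))

lemma hasSum_Bd (p : ℝ × ℝ) : HasSum (fun n => Bd t x y n p) (BdSum t x y p) := by
  have h : HasSum (fun n : ℕ => (|t| * ((|x| + |p.1|) * (|y| + |p.2|))) ^ n / (n !))
      (Real.exp (|t| * ((|x| + |p.1|) * (|y| + |p.2|)))) := by
    rw [Real.exp_eq_exp_ℝ]
    exact NormedSpace.expSeries_div_hasSum_exp _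
  have h2 := h.mul_right (Real.exp (-p.1 ^ 2 / 2) * Real.exp (-p.2 ^ 2 / 2))
  have he : (fun n : ℕ => (|t| * ((|x| + |p.1|) * (|y| + |p.2|))) ^ n / (n !)
      * (Real.exp (-p.1 ^ 2 / 2) * Real.exp (-p.2 ^ 2 / 2))) = fun n => Bd t x y n p := by
    funext n
    unfold Bd
    rw [mul_pow, mul_pow]
    ring
  exact he ▸ h2

lemma norm_Fn_le (n : ℕ) (p : ℝ × ℝ) : ‖Fn t x y n p‖ ≤ Bd t x y n p := by
  unfold Fn Bd
  rw [norm_mul, norm_mul, norm_mul, norm_mul, norm_div, norm_pow, norm_pow, norm_pow,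
    Complex.norm_real, Complex.norm_real, Complex.norm_real, Complex.norm_natCast,
    Real.norm_eq_abs, Real.norm_eq_abs, Real.norm_eq_abs,
    abs_of_pos (Real.exp_pos _), abs_of_pos (Real.exp_pos _)]
  gcongr
  · exact Mehler.norm_line_le x p.1
  · exact Mehler.norm_line_le y p.2

/-- key pointwise exponent inequality -/
lemma exponent_ineq (ht : |t| < 1) (s u : ℝ) :
    |t| * ((|x| + |s|) * (|y| + |u|)) + (-s ^ 2 / 2) + (-u ^ 2 / 2)
      ≤ (x ^ 2 + y ^ 2) / (2 * ((1 - |t|) / 2)) + |x| * |y|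
        + (-(((1 - |t|) / 2) / 2 * s ^ 2)) + (-(((1 - |t|) / 2) / 2 * u ^ 2)) := by
  set b : ℝ := (1 - |t|) / 2 with hbdef
  have hb : 0 < b := by simp [hbdef]; linarith
  have h1 : |x| * |u| ≤ b / 2 * u ^ 2 + x ^ 2 / (2 * b) := by
    have e : b / 2 * u ^ 2 + x ^ 2 / (2 * b) = (b ^ 2 * u ^ 2 + x ^ 2) / (2 * b) := by
      field_simp
    rw [e, le_div_iff₀ (by positivity)]
    nlinarith [sq_nonneg (b * |u| - |x|), _root_.sq_abs u, _root_.sq_abs x]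
  have h2 : |y| * |s| ≤ b / 2 * s ^ 2 + y ^ 2 / (2 * b) := by
    have e : b / 2 * s ^ 2 + y ^ 2 / (2 * b) = (b ^ 2 * s ^ 2 + y ^ 2) / (2 * b) := by
      field_simp
    rw [e, le_div_iff₀ (by positivity)]
    nlinarith [sq_nonneg (b * |s| - |y|), _root_.sq_abs s, _root_.sq_abs y]
  have h3 : |s| * |u| ≤ s ^ 2 / 2 + u ^ 2 / 2 := by
    nlinarith [sq_nonneg (|s| - |u|), _root_.sq_abs s, _root_.sq_abs u]
  have ht0 : 0 ≤ |t| := abs_nonneg t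
  have hxy : |t| * (|x| * |y|) ≤ |x| * |y| := by
    nlinarith [abs_nonneg x, abs_nonneg y, mul_nonneg (abs_nonneg x) (abs_nonneg y)]
  have hxu : |t| * (|x| * |u|) ≤ |x| * |u| := by
    nlinarith [mul_nonneg (abs_nonneg x) (abs_nonneg u)]
  have hys : |t| * (|y| * |s|) ≤ |y| * |s| := by
    nlinarith [mul_nonneg (abs_nonneg y) (abs_nonneg s)]
  have hsu : |t| * (|s| * |u|) ≤ |t| * (s ^ 2 / 2 + u ^ 2 / 2) :=
    mul_le_mul_of_nonneg_left h3 ht0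
  have hx2 : (x ^ 2 + y ^ 2) / (2 * b) = x ^ 2 / (2 * b) + y ^ 2 / (2 * b) := by ring
  rw [hx2]
  have hexp : |t| * ((|x| + |s|) * (|y| + |u|))
      = |t| * (|x| * |y|) + |t| * (|x| * |u|) + |t| * (|y| * |s|) + |t| * (|s| * |u|) := by ring
  rw [hexp]
  have hb2 : b / 2 + b / 2 + |t| / 2 ≤ 1 / 2 := by
    rw [hbdef]; linarith
  nlinarith [sq_nonneg s, sq_nonneg u]

lemma cont_Fn (n : ℕ) : Continuous (Fn t x y n) := by
  unfold Fn
  fun_prop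

lemma cont_Ff : Continuous (Ff t x y) := by
  unfold Ff
  fun_prop

lemma cont_BdSum : Continuous (BdSum t x y) := by
  unfold BdSum
  fun_prop

lemma integrable_BdSum (ht : |t| < 1) : Integrable (BdSum t x y) := by
  set b : ℝ := (1 - |t|) / 2 with hbdef
  have hb : 0 < b := by simp [hbdef]; linarith
  have hb2 : (0:ℝ) < b / 2 := by positivity
  have hG : Integrable (fun p : ℝ × ℝ =>
      Real.exp ((x ^ 2 + y ^ 2) / (2 * b) + |x| * |y|)
        * (Real.exp (-(b / 2 * p.1 ^ 2)) * Real.exp (-(b / 2 * p.2 ^ 2)))) := by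
    rw [MeasureTheory.Measure.volume_eq_prod]
    have h1 : Integrable (fun s : ℝ => Real.exp (-(b / 2 * s ^ 2))) := by
      have := integrable_exp_neg_mul_sq hb2
      simpa [neg_mul] using this
    exact (h1.mul_prod h1).const_mul _
  refine hG.mono' (Mehler.cont_BdSum t x y).aestronglyMeasurable
    (Filter.Eventually.of_forall fun p => ?_)
  unfold BdSum
  rw [Real.norm_eq_abs, abs_of_pos (by positivity)]
  rw [← Real.exp_add, ← Real.exp_add, ← Real.exp_add, ← Real.exp_add]
  apply Real.exp_le_exp.mpr
  have := Mehler.exponent_ineq t x y ht p.1 p.2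
  rw [hbdef]
  linarith [this]

lemma norm_Ff_le (p : ℝ × ℝ) : ‖Ff t x y p‖ ≤ BdSum t x y p := by
  unfold Ff BdSum
  rw [norm_mul, norm_mul, Complex.norm_real, Complex.norm_real, Real.norm_eq_abs,
    Real.norm_eq_abs, abs_of_pos (Real.exp_pos _), abs_of_pos (Real.exp_pos _)]
  apply mul_le_mul_of_nonneg_right _ (by positivity)
  rw [Complex.norm_exp]
  apply Real.exp_le_exp.mpr
  refine (Complex.re_le_norm _).trans ?_
  rw [norm_mul, norm_mul]
  rw [Complex.norm_real,
    Real.norm_eq_abs]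
  have h1 := Mehler.norm_line_le x p.1
  have h2 := Mehler.norm_line_le y p.2
  have := mul_le_mul h1 h2 (norm_nonneg _) (by positivity)
  nlinarith [abs_nonneg t, norm_nonneg ((x : ℂ) + p.1 * I), norm_nonneg ((y : ℂ) + p.2 * I),
    mul_le_mul_of_nonneg_left this (abs_nonneg t)]

lemma integrable_Ff (ht : |t| < 1) : Integrable (Ff t x y) :=
  (Mehler.integrable_BdSum t x y ht).mono' (Mehler.cont_Ff t x y).aestronglyMeasurable
    (Filter.Eventually.of_forall fun p => Mehler.norm_Ff_le t x y p)

lemma hasSum_Fn (p : ℝ × ℝ) : HasSum (fun n => Fn t x y n p) (Ff t x y p) := by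
  have h : HasSum (fun n : ℕ => ((t : ℂ) * ((x : ℂ) + p.1 * I) * ((y : ℂ) + p.2 * I)) ^ n / (n !))
      (Complex.exp ((t : ℂ) * ((x : ℂ) + p.1 * I) * ((y : ℂ) + p.2 * I))) := by
    rw [Complex.exp_eq_exp_ℂ]
    exact NormedSpace.expSeries_div_hasSum_exp _
  have h2 := h.mul_right ((Real.exp (-p.1 ^ 2 / 2) : ℂ) * (Real.exp (-p.2 ^ 2 / 2) : ℂ))
  have he : (fun n : ℕ => ((t : ℂ) * ((x : ℂ) + p.1 * I) * ((y : ℂ) + p.2 * I)) ^ n / (n !)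
        * ((Real.exp (-p.1 ^ 2 / 2) : ℂ) * (Real.exp (-p.2 ^ 2 / 2) : ℂ)))
      = fun n => Fn t x y n p := by
    funext n
    unfold Fn
    rw [mul_pow, mul_pow]
    ring
  exact he ▸ h2

lemma integral_Fn (n : ℕ) :
    ∫ p : ℝ × ℝ, Fn t x y n p
      = ((t ^ n / (n !) * hermiteEval n x * hermiteEval n y * (2 * π) : ℝ) : ℂ) := by
  unfold Fn
  rw [MeasureTheory.Measure.volume_eq_prod, MeasureTheory.integral_const_mul,
    MeasureTheory.integral_prod_mul (f := fun s : ℝ => ((x : ℂ) + s * I) ^ n * (Real.exp (-s ^ 2 / 2) : ℂ))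
      (g := fun u : ℝ => ((y : ℂ) + u * I) ^ n * (Real.exp (-u ^ 2 / 2) : ℂ)),
    Mehler.gauss_hermite x n, Mehler.gauss_hermite y n]
  have h2π : Real.sqrt (2 * π) * Real.sqrt (2 * π) = 2 * π :=
    Real.mul_self_sqrt (by positivity)
  have hre : (hermiteEval n x * Real.sqrt (2 * π)) * (hermiteEval n y * Real.sqrt (2 * π))
      = hermiteEval n x * hermiteEval n y * (2 * π) := by rw [mul_mul_mul_comm, h2π]
  rw [← Complex.ofReal_mul, hre]
  push_cast
  ring

lemma hasSum_integrals (ht : |t| < 1) :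
    HasSum (fun n => ∫ p : ℝ × ℝ, Fn t x y n p) (∫ p : ℝ × ℝ, Ff t x y p) := by
  refine MeasureTheory.hasSum_integral_of_dominated_convergence (Bd t x y)
    (fun n => (Mehler.cont_Fn t x y n).aestronglyMeasurable)
    (fun n => Filter.Eventually.of_forall fun p => Mehler.norm_Fn_le t x y n p)
    (Filter.Eventually.of_forall fun p => (Mehler.hasSum_Bd t x y p).summable)
    ?_
    (Filter.Eventually.of_forall fun p => Mehler.hasSum_Fn t x y p)
  refine (Mehler.integrable_BdSum t x y ht).congr ?_
  exact Filter.Eventually.of_forall fun p => ((Mehler.hasSum_Bd t x y p).tsum_eq).symm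

end Mehler

end Main
section Final

open Complex

namespace Mehler

variable (t x y : ℝ)

lemma inner_integral (ht : |t| < 1) (s : ℝ) :
    ∫ u : ℝ, Ff t x y (s, u)
      = (Real.exp (-s ^ 2 / 2) : ℂ) * (((Real.sqrt (2 * π) : ℝ) : ℂ)
        * Complex.exp ((t : ℂ) * ((x : ℂ) + s * I) * (y : ℂ)
            - (t : ℂ) ^ 2 * ((x : ℂ) + s * I) ^ 2 / 2)) := by
  have hb : (-(1/2) : ℂ).re < 0 := by norm_num
  have hsplit : (fun u : ℝ => Ff t x y (s, u)) = fun u : ℝ =>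
      (Real.exp (-s ^ 2 / 2) : ℂ) * Complex.exp ((-(1/2) : ℂ) * u ^ 2
        + ((t : ℂ) * ((x : ℂ) + s * I) * I) * u + (t : ℂ) * ((x : ℂ) + s * I) * (y : ℂ)) := by
    funext u
    unfold Ff
    rw [show ((Real.exp (-u ^ 2 / 2) : ℝ) : ℂ) = Complex.exp (((-u ^ 2 / 2 : ℝ)) : ℂ) from
      Complex.ofReal_exp _]
    rw [show Complex.exp ((t : ℂ) * ((x : ℂ) + s * I) * ((y : ℂ) + u * I))
          * ((Real.exp (-s ^ 2 / 2) : ℂ) * Complex.exp (((-u ^ 2 / 2 : ℝ)) : ℂ))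
        = (Real.exp (-s ^ 2 / 2) : ℂ)
          * (Complex.exp ((t : ℂ) * ((x : ℂ) + s * I) * ((y : ℂ) + u * I))
            * Complex.exp (((-u ^ 2 / 2 : ℝ)) : ℂ)) from by ring]
    rw [← Complex.exp_add]
    congr 1
    push_cast
    ring
  rw [hsplit, integral_const_mul, integral_cexp_quadratic hb]
  have hpi : ((π : ℂ) / -(-(1/2) : ℂ)) ^ (1/2 : ℂ) = ((Real.sqrt (2 * π) : ℝ) : ℂ) := by
    have h1 : ((π : ℂ) / -(-(1/2) : ℂ)) = ((2 * π : ℝ) : ℂ) := by push_cast; ring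
    rw [h1, show (1/2 : ℂ) = ((1/2 : ℝ) : ℂ) by norm_num,
      ← Complex.ofReal_cpow (by positivity)]
    exact congrArg _ (Real.sqrt_eq_rpow _).symm
  have hexp : (t : ℂ) * ((x : ℂ) + s * I) * (y : ℂ)
        - ((t : ℂ) * ((x : ℂ) + s * I) * I) ^ 2 / (4 * (-(1/2) : ℂ))
      = (t : ℂ) * ((x : ℂ) + s * I) * (y : ℂ) - (t : ℂ) ^ 2 * ((x : ℂ) + s * I) ^ 2 / 2 := by
    linear_combination ((t : ℂ) * ((x : ℂ) + s * I)) ^ 2 / 2 * Complex.I_sq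
  rw [hpi, hexp]

lemma integral_Ff (ht : |t| < 1) :
    ∫ p : ℝ × ℝ, Ff t x y p
      = (((Real.sqrt (1 - t ^ 2))⁻¹
          * Real.exp ((t * x * y - t ^ 2 / 2 * (x ^ 2 + y ^ 2)) / (1 - t ^ 2)) * (2 * π) : ℝ) : ℂ) := by
  have ht2 : t ^ 2 < 1 := by nlinarith [_root_.sq_abs t, abs_nonneg t]
  have h1t : (0 : ℝ) < 1 - t ^ 2 := by linarith
  have h1t' : (1 - t ^ 2 : ℝ) ≠ 0 := ne_of_gt h1t
  have h1t'' : (t ^ 2 - 1 : ℝ) ≠ 0 := by intro h; apply h1t'; linarith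
  rw [MeasureTheory.Measure.volume_eq_prod,
    MeasureTheory.integral_prod _ (Mehler.integrable_Ff t x y ht)]
  simp_rw [Mehler.inner_integral t x y ht]
  set b' : ℂ := (((t ^ 2 - 1) / 2 : ℝ) : ℂ) with hb'def
  set c' : ℂ := ((t * y - t ^ 2 * x : ℝ) : ℂ) * I with hc'def
  set d' : ℂ := ((t * x * y - t ^ 2 * x ^ 2 / 2 : ℝ) : ℂ) with hd'def
  have hb' : b'.re < 0 := by
    rw [hb'def, Complex.ofReal_re]; linarith
  have hsplit2 : (fun s : ℝ => (Real.exp (-s ^ 2 / 2) : ℂ) * (((Real.sqrt (2 * π) : ℝ) : ℂ)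
      * Complex.exp ((t : ℂ) * ((x : ℂ) + s * I) * (y : ℂ)
          - (t : ℂ) ^ 2 * ((x : ℂ) + s * I) ^ 2 / 2)))
      = fun s : ℝ => ((Real.sqrt (2 * π) : ℝ) : ℂ)
          * Complex.exp (b' * s ^ 2 + c' * s + d') := by
    funext s
    rw [show ((Real.exp (-s ^ 2 / 2) : ℝ) : ℂ) = Complex.exp (((-s ^ 2 / 2 : ℝ)) : ℂ) from
      Complex.ofReal_exp _]
    rw [show Complex.exp (((-s ^ 2 / 2 : ℝ)) : ℂ) * (((Real.sqrt (2 * π) : ℝ) : ℂ)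
          * Complex.exp ((t : ℂ) * ((x : ℂ) + s * I) * (y : ℂ)
            - (t : ℂ) ^ 2 * ((x : ℂ) + s * I) ^ 2 / 2))
        = ((Real.sqrt (2 * π) : ℝ) : ℂ) * (Complex.exp (((-s ^ 2 / 2 : ℝ)) : ℂ)
          * Complex.exp ((t : ℂ) * ((x : ℂ) + s * I) * (y : ℂ)
            - (t : ℂ) ^ 2 * ((x : ℂ) + s * I) ^ 2 / 2)) from by ring]
    rw [← Complex.exp_add]
    congr 1
    congr 1
    rw [hb'def, hc'def, hd'def]
    push_cast
    linear_combination (-(t : ℂ) ^ 2 * (s : ℂ) ^ 2 / 2) * Complex.I_sq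
  rw [hsplit2, integral_const_mul, integral_cexp_quadratic hb' c' d']
  have hpi2 : ((π : ℂ) / -b') ^ (1/2 : ℂ) = ((Real.sqrt (2 * π / (1 - t ^ 2)) : ℝ) : ℂ) := by
    have h1 : ((π : ℂ) / -b') = ((2 * π / (1 - t ^ 2) : ℝ) : ℂ) := by
      rw [hb'def, ← Complex.ofReal_neg, ← Complex.ofReal_div]
      refine Complex.ofReal_inj.mpr ?_
      field_simp
      ring
    rw [h1, show (1/2 : ℂ) = ((1/2 : ℝ) : ℂ) by norm_num,
      ← Complex.ofReal_cpow (by positivity)]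
    exact congrArg _ (Real.sqrt_eq_rpow _).symm
  have hexp2 : d' - c' ^ 2 / (4 * b')
      = (((t * x * y - t ^ 2 / 2 * (x ^ 2 + y ^ 2)) / (1 - t ^ 2) : ℝ) : ℂ) := by
    have hc2 : c' ^ 2 = -(((t * y - t ^ 2 * x : ℝ) ^ 2 : ℝ) : ℂ) := by
      rw [hc'def]
      push_cast
      linear_combination ((t : ℂ) * y - t ^ 2 * x) ^ 2 * Complex.I_sq
    have h4b : (4 : ℂ) * b' = ((2 * (t ^ 2 - 1) : ℝ) : ℂ) := by
      rw [hb'def]; push_cast; ring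
    rw [hc2, h4b, hd'def, ← Complex.ofReal_neg, ← Complex.ofReal_div, ← Complex.ofReal_sub]
    refine Complex.ofReal_inj.mpr ?_
    field_simp
    ring
  rw [hpi2, hexp2]
  rw [show Complex.exp (((t * x * y - t ^ 2 / 2 * (x ^ 2 + y ^ 2)) / (1 - t ^ 2) : ℝ) : ℂ)
      = ((Real.exp ((t * x * y - t ^ 2 / 2 * (x ^ 2 + y ^ 2)) / (1 - t ^ 2)) : ℝ) : ℂ) from
    (Complex.ofReal_exp _).symm]
  rw [← Complex.ofReal_mul, ← Complex.ofReal_mul]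
  refine Complex.ofReal_inj.mpr ?_
  rw [Real.sqrt_div (by positivity : (0:ℝ) ≤ 2 * π)]
  have h2π : Real.sqrt (2 * π) * Real.sqrt (2 * π) = 2 * π :=
    Real.mul_self_sqrt (by positivity)
  rw [div_eq_mul_inv]
  rw [show Real.sqrt (2 * π) * (Real.sqrt (2 * π) * (Real.sqrt (1 - t ^ 2))⁻¹
        * Real.exp ((t * x * y - t ^ 2 / 2 * (x ^ 2 + y ^ 2)) / (1 - t ^ 2)))
      = (Real.sqrt (2 * π) * Real.sqrt (2 * π)) * ((Real.sqrt (1 - t ^ 2))⁻¹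
        * Real.exp ((t * x * y - t ^ 2 / 2 * (x ^ 2 + y ^ 2)) / (1 - t ^ 2))) from by ring, h2π]
  ring

end Mehler

end Final

/-- Mehler's formula for the probabilist's Hermite polynomials: for `|t| < 1`,
`Σ_{n≥0} (tⁿ/n!) He_n(x) He_n(y)` converges to
`(1−t²)^{-1/2} exp((txy − (t²/2)(x² + y²))/(1−t²))`. -/
theorem stmt16 (t x y : ℝ) (ht : |t| < 1) :
    HasSum (fun n : ℕ => t ^ n / (n.factorial : ℝ) * hermiteEval n x * hermiteEval n y)
      ((Real.sqrt (1 - t ^ 2))⁻¹ *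
        Real.exp ((t * x * y - t ^ 2 / 2 * (x ^ 2 + y ^ 2)) / (1 - t ^ 2))) := by
  have key := Mehler.hasSum_integrals t x y ht
  rw [Mehler.integral_Ff t x y ht] at key
  have he : (fun n : ℕ => ∫ p : ℝ × ℝ, Mehler.Fn t x y n p)
      = fun n : ℕ => ((t ^ n / (n ! : ℝ) * hermiteEval n x * hermiteEval n y * (2 * π) : ℝ) : ℂ) :=
    funext fun n => Mehler.integral_Fn t x y n
  rw [he] at key
  have hr := Complex.hasSum_ofReal.mp key
  exact (hasSum_mul_right_iff (by positivity : (0:ℝ) < 2 * π).ne').mp hr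
end

section
/- Let (λ_j, u_j, v_j) be the singular value decomposition of a compact operator A : H_W → H_X, let H⁰ be the least-norm solution of AH = b, and suppose Σ_j λ_j^{-2θ} |⟨H⁰, u_j⟩|² < ∞ for some θ ≥ 2. Then the Tikhonov-regularized solution H^λ = (A*A + λI)^{-1}A*b satisfies ‖H^λ − H⁰‖²_{H_W} ≤ O(λ^{min(θ,2)}) as λ → 0; explicitly, ‖H^λ − H⁰‖² ≤ sup_j (λ λ_j^θ/(λ_j² + λ))² · Σ_j λ_j^{-2θ}|⟨H⁰,u_j⟩|². -/
open ContinuousLinearMap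

/-- Tikhonov regularization bias bound. Let `A : H_W → H_X` be a compact operator with
singular system `(s_j, u_j, v_j)` (so `A u_j = s_j v_j`, `A* v_j = s_j u_j`, singular
values bounded), and let `H⁰ = Σ_j c_j u_j` with `c_j = ⟨u_j, H⁰⟩` satisfy the source
condition `Σ_j s_j^{-2θ} c_j² < ∞` for some `θ ≥ 2`.  Then the Tikhonov-regularized
solution `H^λ = Σ_j (s_j²/(s_j²+λ)) c_j u_j` satisfies
`‖H^λ − H⁰‖² ≤ sup_j (λ s_j^θ/(s_j² + λ))² · Σ_j s_j^{-2θ} c_j²`. -/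
theorem stmt18 {HW HX : Type*}
    [NormedAddCommGroup HW] [InnerProductSpace ℝ HW] [CompleteSpace HW]
    [NormedAddCommGroup HX] [InnerProductSpace ℝ HX] [CompleteSpace HX]
    (A : HW →L[ℝ] HX) (hA : IsCompactOperator ⇑A)
    (u : ℕ → HW) (v : ℕ → HX) (s : ℕ → ℝ)
    (hu : Orthonormal ℝ u) (hv : Orthonormal ℝ v)
    (hs : ∀ j, 0 < s j) (C : ℝ) (hsC : ∀ j, s j ≤ C)
    (hAu : ∀ j, A (u j) = s j • v j)
    (hAadj : ∀ j, ContinuousLinearMap.adjoint A (v j) = s j • u j)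
    (lam θ : ℝ) (hlam : 0 < lam) (hθ : 2 ≤ θ)
    (c : ℕ → ℝ) (H0 Hlam : HW)
    (hc : ∀ j, c j = inner ℝ (u j) H0)
    (hH0 : HasSum (fun j => c j • u j) H0)
    (hsource : Summable (fun j => s j ^ (-(2 * θ)) * (c j) ^ 2))
    (hHlam : HasSum (fun j => ((s j) ^ 2 / ((s j) ^ 2 + lam) * c j) • u j) Hlam) :
    ‖Hlam - H0‖ ^ 2
      ≤ (⨆ j, (lam * s j ^ θ / ((s j) ^ 2 + lam)) ^ 2) *
        ∑' j, s j ^ (-(2 * θ)) * (c j) ^ 2 := by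
  set d : ℕ → ℝ := fun j => (s j) ^ 2 / ((s j) ^ 2 + lam) * c j - c j with hd
  set x := Hlam - H0 with hxdef
  have hden : ∀ j, 0 < (s j) ^ 2 + lam := fun j => by positivity
  have hx : HasSum (fun j => d j • u j) x := by
    have := hHlam.sub hH0
    simpa [hd, sub_smul] using this
  have hite := orthonormal_iff_ite.mp hu
  have coeff : ∀ j, (inner ℝ (u j) x : ℝ) = d j := by
    intro j
    have h1 : HasSum (fun k => (inner ℝ (u j) (d k • u k) : ℝ)) (inner ℝ (u j) x) :=
      (innerSL ℝ (u j)).hasSum hx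
    have h2 : (fun k => (inner ℝ (u j) (d k • u k) : ℝ))
        = fun k => if k = j then d j else 0 := by
      funext k
      rw [inner_smul_right, hite j k]
      by_cases h : j = k <;> simp [h, eq_comm]
    rw [h2] at h1
    exact h1.unique (hasSum_ite_eq j (d j))
  have hnorm : HasSum (fun j => d j ^ 2) (‖x‖ ^ 2) := by
    have h1 : HasSum (fun j => (inner ℝ x (d j • u j) : ℝ)) (inner ℝ x x) :=
      (innerSL ℝ x).hasSum hx
    have h2 : (fun j => (inner ℝ x (d j • u j) : ℝ)) = fun j => d j ^ 2 := by
      funext j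
      rw [inner_smul_right, real_inner_comm, coeff j]; ring
    rw [h2, real_inner_self_eq_norm_sq] at h1
    exact h1
  -- key algebraic identity
  have key : ∀ j, d j ^ 2
      = (lam * s j ^ θ / ((s j) ^ 2 + lam)) ^ 2 * (s j ^ (-(2 * θ)) * (c j) ^ 2) := by
    intro j
    have hsj := hs j
    have e3 : (s j ^ θ) ^ 2 * s j ^ (-(2 * θ)) = 1 := by
      rw [sq, ← Real.rpow_add hsj, ← Real.rpow_add hsj]
      have : θ + θ + -(2 * θ) = 0 := by ring
      rw [this, Real.rpow_zero]
    have hd0 : d j = -(lam / ((s j) ^ 2 + lam)) * c j := by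
      rw [hd]; field_simp; ring
    rw [hd0]
    have hne : ((s j) ^ 2 + lam) ≠ 0 := (hden j).ne'
    field_simp
    linear_combination (-(c j ^ 2)) * e3
  -- boundedness of the sup
  have hbdd : BddAbove (Set.range fun j => (lam * s j ^ θ / ((s j) ^ 2 + lam)) ^ 2) := by
    refine ⟨(lam * C ^ (θ - 2)) ^ 2, ?_⟩
    rintro _ ⟨j, rfl⟩
    have hsj := hs j
    have hC : 0 < C := lt_of_lt_of_le hsj (hsC j)
    have h1 : lam * s j ^ θ / ((s j) ^ 2 + lam) ≤ lam * C ^ (θ - 2) := by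
      have e1 : s j ^ θ = s j ^ (θ - 2) * s j ^ 2 := by
        rw [← Real.rpow_natCast (s j) 2, ← Real.rpow_add hsj]; norm_num
      rw [e1]
      rw [div_le_iff₀ (hden j)]
      have h2 : s j ^ (θ - 2) ≤ C ^ (θ - 2) :=
        Real.rpow_le_rpow hsj.le (hsC j) (by linarith)
      have h3 : (s j) ^ 2 ≤ (s j) ^ 2 + lam := by linarith
      calc lam * (s j ^ (θ - 2) * s j ^ 2) ≤ lam * (C ^ (θ - 2) * ((s j) ^ 2 + lam)) := by
            apply mul_le_mul_of_nonneg_left _ hlam.le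
            apply mul_le_mul h2 h3 (by positivity) (by positivity)
        _ = lam * C ^ (θ - 2) * ((s j) ^ 2 + lam) := by ring
    have h0 : 0 ≤ lam * s j ^ θ / ((s j) ^ 2 + lam) := by positivity
    exact pow_le_pow_left₀ h0 h1 2
  have hterm : ∀ j, d j ^ 2
      ≤ (⨆ j, (lam * s j ^ θ / ((s j) ^ 2 + lam)) ^ 2) * (s j ^ (-(2 * θ)) * (c j) ^ 2) := by
    intro j
    rw [key j]
    exact mul_le_mul_of_nonneg_right (le_ciSup hbdd j)
      (mul_nonneg (Real.rpow_nonneg (hs j).le _) (sq_nonneg _))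
  rw [← hnorm.tsum_eq]
  calc ∑' j, d j ^ 2
      ≤ ∑' j, (⨆ j, (lam * s j ^ θ / ((s j) ^ 2 + lam)) ^ 2) * (s j ^ (-(2 * θ)) * (c j) ^ 2) :=
        Summable.tsum_le_tsum hterm hnorm.summable (hsource.mul_left _)
    _ = _ := tsum_mul_left
end
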